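/- Let r, k be positive integers and γ > 0, and let R̃ be a graph on vertex set [k]×[r] with B_k^r ⊆ R̃ and minimum degree δ(R̃) ≥ ((r−1)/r + γ/2)kr. Then: (i) for every i ∈ [k] there are at least (γ/2)kr vertices v ∈ ([k]∖{i}) × [r] such that {v,(i,j)} is an edge of R̃ for all j ∈ [r]; and (ii) there exists a subgraph R of R̃ with B_k^r ⊆ R, maximum degree Δ(R) ≤ 3r + 2/γ, and such that for every i ∈ [k] there is a vertex sᵢ ∈ ([k]∖{i}) × [r] with {sᵢ,(i,j)} an edge of R for every j ∈ [r]. -/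

import Mathlib

open Finset

namespace Paper

/-- The density `d(A,B) = e(A,B)/(|A||B|)` of a pair of vertex sets
(counting ordered pairs `(a,b) ∈ A × B` that are adjacent). -/
noncomputable def dens {V : Type*} (G : SimpleGraph V) (A B : Finset V) : ℝ :=
  (Set.ncard {p : V × V | p.1 ∈ A ∧ p.2 ∈ B ∧ G.Adj p.1 p.2} : ℝ) /
    ((A.card : ℝ) * (B.card : ℝ))

/-- The pair `(A,B)` is `ε`-regular: `|d(A,B) − d(A′,B′)| ≤ ε` for all `A′ ⊆ A`, `B′ ⊆ B`
with `|A′| ≥ ε|A|` and `|B′| ≥ ε|B|`. -/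
def EpsRegularPair {V : Type*} (G : SimpleGraph V) (ε : ℝ) (A B : Finset V) : Prop :=
  ∀ A' ⊆ A, ∀ B' ⊆ B,
    ε * (A.card : ℝ) ≤ (A'.card : ℝ) → ε * (B.card : ℝ) ≤ (B'.card : ℝ) →
      |dens G A' B' - dens G A B| ≤ ε

/-- `(ε,δ)`-regular pair: `ε`-regular with density at least `δ`. -/
def RegularPair {V : Type*} (G : SimpleGraph V) (ε δ : ℝ) (A B : Finset V) : Prop :=
  EpsRegularPair G ε A B ∧ δ ≤ dens G A B

/-- `(ε,δ)`-super-regular pair: `ε`-regular and every vertex of `A` has at least `δ|B|`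
neighbours in `B` and vice versa. -/
def SuperRegularPair {V : Type*} (G : SimpleGraph V) (ε δ : ℝ) (A B : Finset V) : Prop :=
  EpsRegularPair G ε A B ∧
    (∀ v ∈ A, δ * (B.card : ℝ) ≤ (Set.ncard {u : V | u ∈ B ∧ G.Adj v u} : ℝ)) ∧
    (∀ v ∈ B, δ * (A.card : ℝ) ≤ (Set.ncard {u : V | u ∈ A ∧ G.Adj v u} : ℝ))

/-- A family of vertex sets is `(ε,δ)`-regular on a reduced graph `R`. -/
def RegularOn {V ι : Type*} (G : SimpleGraph V) (ε δ : ℝ) (R : SimpleGraph ι)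
    (P : ι → Finset V) : Prop :=
  ∀ i j, R.Adj i j → RegularPair G ε δ (P i) (P j)

/-- A family of vertex sets is `(ε,δ)`-super-regular on a reduced graph `R`. -/
def SuperRegularOn {V ι : Type*} (G : SimpleGraph V) (ε δ : ℝ) (R : SimpleGraph ι)
    (P : ι → Finset V) : Prop :=
  ∀ i j, R.Adj i j → SuperRegularPair G ε δ (P i) (P j)

/-- `P` is a partition of the whole vertex set. -/
def IsPartitionOn {V ι : Type*} (P : ι → Finset V) : Prop :=
  (∀ i j, i ≠ j → Disjoint (P i) (P j)) ∧ ∀ v : V, ∃ i, v ∈ P i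

/-- `G` contains a copy of `H`: there is an injective graph homomorphism `H → G`. -/
def ContainsCopy {V W : Type*} (G : SimpleGraph V) (H : SimpleGraph W) : Prop :=
  ∃ f : W → V, Function.Injective f ∧ ∀ u v, H.Adj u v → G.Adj (f u) (f v)

/-- `H` has bandwidth at most `b`: there is a labelling of the vertices by `1,…,n`
(equivalently by `Fin n`) such that the labels of adjacent vertices differ by at most `b`. -/
def BandwidthLE {V : Type*} [Fintype V] (H : SimpleGraph V) (b : ℝ) : Prop :=
  ∃ φ : V ≃ Fin (Fintype.card V),
    ∀ u v, H.Adj u v → |((φ u : ℕ) : ℝ) - ((φ v : ℕ) : ℝ)| ≤ b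

/-- `H` is `a`-arrangeable: there is an ordering `φ` of the vertices such that for every
vertex `x`, the left-neighbourhood of the right-neighbourhood of `x` has size at most `a`. -/
def Arrangeable {V : Type*} [Fintype V] (H : SimpleGraph V) (a : ℕ) : Prop :=
  ∃ φ : V ≃ Fin (Fintype.card V), ∀ x : V,
    Set.ncard {u : V | φ u ≤ φ x ∧ ∃ w : V, H.Adj x w ∧ φ x < φ w ∧ H.Adj w u} ≤ a

/-- Maximum degree at most `D`. -/
def MaxDegreeLE {V : Type*} (H : SimpleGraph V) (D : ℝ) : Prop :=
  ∀ v : V, ((H.neighborSet v).ncard : ℝ) ≤ D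

/-- Minimum degree at least `D`. -/
def MinDegreeGE {V : Type*} (G : SimpleGraph V) (D : ℝ) : Prop :=
  ∀ v : V, D ≤ ((G.neighborSet v).ncard : ℝ)

/-- `K_k^r`: the disjoint union of `k` complete graphs on `r` vertices,
on vertex set `[k] × [r]`. -/
def graphK (k r : ℕ) : SimpleGraph (Fin k × Fin r) :=
  SimpleGraph.fromRel fun p q => p.1 = q.1 ∧ p.2 ≠ q.2

/-- `B_k^r`: `(i,j)` and `(i',j')` are adjacent iff `|i − i'| ≤ 1` and `j ≠ j'`. -/
def graphB (k r : ℕ) : SimpleGraph (Fin k × Fin r) :=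
  SimpleGraph.fromRel fun p q => ((p.1 : ℤ) - (q.1 : ℤ)).natAbs ≤ 1 ∧ p.2 ≠ q.2

/-- `C_m^r`: the `r`-th power of the cycle on `m` vertices. -/
def cyclePower (m r : ℕ) : SimpleGraph (Fin m) :=
  SimpleGraph.fromRel fun u v =>
    min (((u : ℤ) - (v : ℤ)).natAbs) (m - ((u : ℤ) - (v : ℤ)).natAbs) ≤ r

/-- `(m i j)` is an `r`-equitable integer partition of `n`. -/
def EquitablePartition (n k r : ℕ) (m : Fin k → Fin r → ℕ) : Prop :=
  (∑ i, ∑ j, m i j) = n ∧ ∀ i j j', m i j ≤ m i j' + 1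

/-- The two-colour Ramsey number of `H` is at most `N`: every red/blue colouring of the
edges of `K_N` (coded by the graph of red edges) contains a monochromatic copy of `H`. -/
def RamseyPropLE {W : Type*} (H : SimpleGraph W) (N : ℕ) : Prop :=
  ∀ Gr : SimpleGraph (Fin N), ContainsCopy Gr H ∨ ContainsCopy Grᶜ H

/-- The vertex labelled `v` (with 1-based label `v+1`) lies in the block
`B_t = {(t−1)4rβn + 1, …, t·4rβn}`. -/
def InBlock (r : ℕ) (β : ℝ) (n : ℕ) (t : ℕ) (v : Fin n) : Prop :=
  ((t : ℝ) - 1) * (4 * r * β * n) < ((v : ℕ) : ℝ) + 1 ∧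
    ((v : ℕ) : ℝ) + 1 ≤ (t : ℝ) * (4 * r * β * n)

/-- The block `B_t` contains a vertex of colour `0`. -/
def BlockHasZero (r : ℕ) (β : ℝ) (n : ℕ) (σ : Fin n → ℕ) (t : ℕ) : Prop :=
  ∃ v : Fin n, InBlock r β n t v ∧ σ v = 0

/-- `σ` is `(ℓ,β)`-zero free: among any `ℓ` consecutive blocks at most one block
contains a vertex of colour `0`. -/
def ZeroFree (ℓ : ℝ) (r : ℕ) (β : ℝ) (n : ℕ) (σ : Fin n → ℕ) : Prop :=
  ∀ t₀ t t' : ℕ, t₀ ≤ t → t₀ ≤ t' → (t : ℝ) < (t₀ : ℝ) + ℓ → (t' : ℝ) < (t₀ : ℝ) + ℓ →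
    BlockHasZero r β n σ t → BlockHasZero r β n σ t' → t = t'

/-- A proper `(r+1)`-colouring with colours `{0,…,r}`. -/
def ProperColoring {n : ℕ} (H : SimpleGraph (Fin n)) (r : ℕ) (σ : Fin n → ℕ) : Prop :=
  (∀ v, σ v ≤ r) ∧ ∀ u v, H.Adj u v → σ u ≠ σ v

/-- `σ : [n] → {0,…,r}` is `x`-balanced. -/
def BalancedColoring (r n : ℕ) (x : ℝ) (σ : Fin n → ℕ) : Prop :=
  (∀ a b : ℕ, a ≤ b → b ≤ n → ∀ c : ℕ, 1 ≤ c → c ≤ r →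
    ((b : ℝ) - (a : ℝ)) / r - x ≤
        (Set.ncard {v : Fin n | σ v = c ∧ a ≤ (v : ℕ) ∧ (v : ℕ) < b} : ℝ) ∧
      (Set.ncard {v : Fin n | σ v = c ∧ a ≤ (v : ℕ) ∧ (v : ℕ) < b} : ℝ) ≤
        ((b : ℝ) - (a : ℝ)) / r + x) ∧
  (Set.ncard {v : Fin n | σ v = 0} : ℝ) ≤ x

/-- The red part of the coloured reduced graph: `ij` is an edge iff `(Vᵢ,Vⱼ)` is a coloured
`ε`-regular pair whose majority colour is red (red density at least `1/2`). -/
def reducedRed {n k : ℕ} (Gred : SimpleGraph (Fin n)) (ε : ℝ) (P : Fin k → Finset (Fin n)) :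
    SimpleGraph (Fin k) :=
  SimpleGraph.fromRel fun i j =>
    EpsRegularPair Gred ε (P i) (P j) ∧ (1 / 2 : ℝ) ≤ dens Gred (P i) (P j)

/-- The blue part of the coloured reduced graph. -/
def reducedBlue {n k : ℕ} (Gred : SimpleGraph (Fin n)) (ε : ℝ) (P : Fin k → Finset (Fin n)) :
    SimpleGraph (Fin k) :=
  SimpleGraph.fromRel fun i j =>
    EpsRegularPair Gred ε (P i) (P j) ∧ dens Gred (P i) (P j) < (1 / 2 : ℝ)



lemma exists_greedy {V : Type*} [DecidableEq V] {k t : ℕ} (hk : 0 < k)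
    (G : Fin k → Finset V) (hG : ∀ i, k ≤ t * (G i).card) :
    ∃ s : Fin k → V, (∀ i, s i ∈ G i) ∧
      ∀ v : V, (univ.filter fun i => s i = v).card ≤ t := by
  classical
  have hne : ∀ i, (G i).Nonempty := by
    intro i
    rcases (G i).eq_empty_or_nonempty with he | h
    · have := hG i; rw [he] at this; simp at this; omega
    · exact h
  suffices h : ∀ A : Finset (Fin k), ∃ s : Fin k → V, (∀ i ∈ A, s i ∈ G i) ∧
      ∀ v : V, (A.filter fun i => s i = v).card ≤ t by
    obtain ⟨s, h1, h2⟩ := h univ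
    exact ⟨s, fun i => h1 i (mem_univ i), h2⟩
  intro A
  induction A using Finset.induction_on with
  | empty => exact ⟨fun i => (hne i).choose, by simp, by simp⟩
  | @insert i A' hiA ih =>
    obtain ⟨s', h1, h2⟩ := ih
    have hex : ∃ v0 ∈ G i, (A'.filter fun j => s' j = v0).card < t := by
      by_contra hcon
      push_neg at hcon
      have hsum : t * (G i).card ≤ ∑ v ∈ G i, (A'.filter fun j => s' j = v).card := by
        calc t * (G i).card = ∑ _v ∈ G i, t := by rw [Finset.sum_const, smul_eq_mul, Nat.mul_comm]
        _ ≤ _ := Finset.sum_le_sum fun v hv => hcon v hv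
      have hdisj : ∀ x ∈ G i, ∀ y ∈ G i, x ≠ y →
          Disjoint (A'.filter fun j => s' j = x) (A'.filter fun j => s' j = y) := by
        intro x _ y _ hxy
        rw [Finset.disjoint_left]
        intro j hjx hjy
        exact hxy ((mem_filter.1 hjx).2 ▸ (mem_filter.1 hjy).2.symm ▸ rfl)
      have hle : ∑ v ∈ G i, (A'.filter fun j => s' j = v).card ≤ A'.card := by
        rw [← Finset.card_biUnion hdisj]
        apply Finset.card_le_card
        intro j hj
        simp only [Finset.mem_biUnion] at hj
        obtain ⟨v, _, hj⟩ := hj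
        exact (Finset.mem_filter.1 hj).1
      have hAcard : A'.card < k := by
        have h5 := Finset.card_le_univ (insert i A')
        rw [Finset.card_insert_of_notMem hiA] at h5
        simp only [Finset.card_univ, Fintype.card_fin] at h5
        omega
      have := hG i
      omega
    obtain ⟨v0, hv0G, hv0c⟩ := hex
    have hupd : ∀ v, (A'.filter fun j => Function.update s' i v0 j = v) =
        A'.filter fun j => s' j = v := by
      intro v
      apply Finset.filter_congr
      intro j hj
      rw [Function.update_of_ne (by intro he; exact absurd (he ▸ hj) hiA)]
    refine ⟨Function.update s' i v0, ?_, ?_⟩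
    · intro j hj
      rcases Finset.mem_insert.1 hj with rfl | hj
      · rw [Function.update_self]; exact hv0G
      · rw [Function.update_of_ne (by intro he; exact absurd (he ▸ hj) hiA)]
        exact h1 j hj
    · intro v
      rw [Finset.filter_insert]
      split_ifs with h
      · rw [Function.update_self] at h
        subst h
        rw [Finset.card_insert_of_notMem (fun hmem => hiA (Finset.mem_filter.1 hmem).1), hupd]
        omega
      · rw [hupd]
        exact h2 v

lemma ncard_eq_degree {V : Type*} [Fintype V] (G : SimpleGraph V) [DecidableRel G.Adj] (v : V) :
    (G.neighborSet v).ncard = G.degree v := by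
  rw [← SimpleGraph.card_neighborFinset_eq_degree, SimpleGraph.neighborFinset_def,
    Set.ncard_eq_toFinset_card']

lemma good_card (r k : ℕ) (hr : 0 < r) (hk : 0 < k) (γ : ℝ) (hγ : 0 < γ)
    (Rt : SimpleGraph (Fin k × Fin r)) (hB : graphB k r ≤ Rt)
    (hδ : MinDegreeGE Rt ((((r : ℝ) - 1) / (r : ℝ) + γ / 2) * ((k : ℝ) * r))) (i : Fin k) :
    γ / 2 * ((k : ℝ) * r) * r ≤
      (({v : Fin k × Fin r | v.1 ≠ i ∧ ∀ j : Fin r, Rt.Adj v (i, j)}).ncard : ℝ) := by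
  classical
  set good : Finset (Fin k × Fin r) :=
    univ.filter (fun v => v.1 ≠ i ∧ ∀ j : Fin r, Rt.Adj v (i, j)) with hgood
  have hset : {v : Fin k × Fin r | v.1 ≠ i ∧ ∀ j : Fin r, Rt.Adj v (i, j)} = ↑good := by
    ext v; simp [hgood]
  rw [hset, Set.ncard_coe_finset]
  set bad : Fin r → Finset (Fin k × Fin r) :=
    fun j => univ.filter (fun v => v.1 ≠ i ∧ ¬ Rt.Adj v (i, j)) with hbad
  -- nat bound on each bad set
  have hbadcard : ∀ j : Fin r, (bad j).card + Rt.degree (i, j) + 1 ≤ k * r := by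
    intro j
    set N : Finset (Fin k × Fin r) := Rt.neighborFinset (i, j) with hN
    set C : Finset (Fin k × Fin r) := univ.filter (fun v => v.1 = i) with hC
    have hCcard : C.card = r := by
      have : C = {i} ×ˢ (univ : Finset (Fin r)) := by
        ext ⟨a, b⟩; simp [hC, eq_comm]
      rw [this, Finset.card_product]; simp
    have hNC : N ∩ C = C.erase (i, j) := by
      ext u
      simp only [Finset.mem_inter, Finset.mem_erase, hN, hC, SimpleGraph.mem_neighborFinset,
        Finset.mem_filter, Finset.mem_univ, true_and]
      constructor
      · rintro ⟨hadj, hu1⟩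
        exact ⟨fun he => Rt.irrefl (he ▸ hadj), hu1⟩
      · rintro ⟨hne, hu1⟩
        refine ⟨?_, hu1⟩
        have hu2 : u.2 ≠ j := by
          intro he; apply hne; exact Prod.ext hu1 he
        have : (graphB k r).Adj (i, j) u := by
          refine ⟨fun he => hne he.symm, Or.inl ?_⟩
          constructor
          · simp [hu1]
          · exact fun he => hu2 (he.symm)
        exact hB this
    have hNCcard : (N ∩ C).card = r - 1 := by
      rw [hNC, Finset.card_erase_of_mem (by simp [hC]), hCcard]
    have hunion : (N ∪ C).card + (r - 1) = Rt.degree (i, j) + r := by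
      rw [← hNCcard, Finset.card_union_add_card_inter, hCcard,
        SimpleGraph.card_neighborFinset_eq_degree]
    have hdisj : Disjoint (bad j) (N ∪ C) := by
      rw [Finset.disjoint_left]
      intro v hv hvNC
      simp only [hbad, Finset.mem_filter, Finset.mem_univ, true_and] at hv
      rcases Finset.mem_union.1 hvNC with h | h
      · exact hv.2 (Rt.adj_symm (by rwa [hN, SimpleGraph.mem_neighborFinset] at h))
      · exact hv.1 (by simpa [hC] using h)
    have htot : (bad j).card + (N ∪ C).card ≤ k * r := by
      rw [← Finset.card_union_of_disjoint hdisj]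
      calc ((bad j) ∪ (N ∪ C)).card ≤ (univ : Finset (Fin k × Fin r)).card :=
            Finset.card_le_univ _
        _ = k * r := by simp [Fintype.card_prod]
    omega
  -- covering bound
  have hcover : (k - 1) * r ≤ good.card + ∑ j : Fin r, (bad j).card := by
    have hsub : univ.filter (fun v : Fin k × Fin r => v.1 ≠ i) ⊆
        good ∪ univ.biUnion bad := by
      intro v hv
      simp only [Finset.mem_filter, Finset.mem_univ, true_and] at hv
      by_cases hall : ∀ j : Fin r, Rt.Adj v (i, j)
      · exact Finset.mem_union_left _ (by simp [hgood, hv, hall])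
      · push_neg at hall
        obtain ⟨j, hj⟩ := hall
        exact Finset.mem_union_right _ (Finset.mem_biUnion.2 ⟨j, Finset.mem_univ _,
          by simp [hbad, hv, hj]⟩)
    have hnotcol : (univ.filter (fun v : Fin k × Fin r => v.1 ≠ i)).card = (k - 1) * r := by
      have : univ.filter (fun v : Fin k × Fin r => v.1 ≠ i) = ({i}ᶜ : Finset (Fin k)) ×ˢ univ := by
        ext ⟨a, b⟩; simp
      rw [this, Finset.card_product, Finset.card_compl]
      simp
    calc (k - 1) * r = (univ.filter (fun v : Fin k × Fin r => v.1 ≠ i)).card := hnotcol.symm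
      _ ≤ (good ∪ univ.biUnion bad).card := Finset.card_le_card hsub
      _ ≤ good.card + (univ.biUnion bad).card := Finset.card_union_le _ _
      _ ≤ good.card + ∑ j : Fin r, (bad j).card := by
          exact Nat.add_le_add_left (Finset.card_biUnion_le) _
  -- real arithmetic
  have hrR : (1 : ℝ) ≤ (r : ℝ) := by exact_mod_cast hr
  have hkR : (1 : ℝ) ≤ (k : ℝ) := by exact_mod_cast hk
  have hrne : (r : ℝ) ≠ 0 := by positivity
  have hbadR : ∀ j : Fin r, ((bad j).card : ℝ) ≤ (k : ℝ) - 1 - γ / 2 * ((k : ℝ) * r) := by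
    intro j
    have h1 := hbadcard j
    have h2 : ((((r : ℝ) - 1) / (r : ℝ) + γ / 2) * ((k : ℝ) * r)) ≤ Rt.degree (i, j) := by
      have := hδ (i, j)
      rwa [ncard_eq_degree] at this
    have h3 : ((bad j).card : ℝ) + (Rt.degree (i, j) : ℝ) + 1 ≤ (k : ℝ) * r := by
      exact_mod_cast h1
    have h4 : (((r : ℝ) - 1) / (r : ℝ)) * ((k : ℝ) * r) = ((r : ℝ) - 1) * k := by
      field_simp
    nlinarith [h2, h3]
  have hcoverR : ((k : ℝ) - 1) * r ≤ (good.card : ℝ) + ∑ j : Fin r, ((bad j).card : ℝ) := by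
    have : (((k - 1) * r : ℕ) : ℝ) ≤ ((good.card + ∑ j : Fin r, (bad j).card : ℕ) : ℝ) := by
      exact_mod_cast hcover
    push_cast [Nat.cast_sub hk] at this
    convert this using 2 <;> push_cast <;> ring
  have hsumR : ∑ j : Fin r, ((bad j).card : ℝ) ≤ (r : ℝ) * ((k : ℝ) - 1 - γ / 2 * ((k : ℝ) * r)) := by
    calc ∑ j : Fin r, ((bad j).card : ℝ) ≤ ∑ _j : Fin r, ((k : ℝ) - 1 - γ / 2 * ((k : ℝ) * r)) :=
          Finset.sum_le_sum fun j _ => hbadR j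
      _ = (r : ℝ) * ((k : ℝ) - 1 - γ / 2 * ((k : ℝ) * r)) := by
          rw [Finset.sum_const]; simp [mul_comm]
  nlinarith [hcoverR, hsumR]

lemma degB_le (k r : ℕ) (v : Fin k × Fin r) :
    ((graphB k r).neighborSet v).ncard ≤ 3 * (r - 1) := by
  classical
  rw [Set.ncard_eq_toFinset_card', ← SimpleGraph.neighborFinset_def]
  have hsub : (graphB k r).neighborFinset v ⊆
      (univ.filter fun c : Fin k => (((v.1 : ℤ)) - (c : ℤ)).natAbs ≤ 1) ×ˢ ({v.2}ᶜ) := by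
    intro u hu
    rw [SimpleGraph.mem_neighborFinset] at hu
    obtain ⟨hne, hrel⟩ := hu
    have h1 : (((v.1 : ℤ)) - ((u.1 : ℤ))).natAbs ≤ 1 := by
      rcases hrel with ⟨h, _⟩ | ⟨h, _⟩ <;> omega
    have h2 : u.2 ≠ v.2 := by
      rcases hrel with ⟨_, h⟩ | ⟨_, h⟩
      · exact h.symm
      · exact h
    rw [Finset.mem_product]
    exact ⟨by simp [h1], by simpa using h2⟩
  calc ((graphB k r).neighborFinset v).card
      ≤ _ := Finset.card_le_card hsub
    _ ≤ 3 * (r - 1) := by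
        rw [Finset.card_product]
        have hc1 : (univ.filter fun c : Fin k => (((v.1 : ℤ)) - (c : ℤ)).natAbs ≤ 1).card ≤ 3 := by
          have h3 : ({(v.1 : ℤ) - 1, (v.1 : ℤ), (v.1 : ℤ) + 1} : Finset ℤ).card ≤ 3 := by
            apply le_trans (Finset.card_insert_le _ _)
            apply Nat.succ_le_succ
            apply le_trans (Finset.card_insert_le _ _)
            simp
          refine le_trans (Finset.card_le_card_of_injOn (fun c => (c : ℤ)) ?_ ?_) h3
          · intro c hc
            simp only [Finset.mem_coe, Finset.mem_filter, Finset.mem_univ, true_and] at hc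
            simp only [Finset.mem_coe, Finset.mem_insert, Finset.mem_singleton]
            omega
          · intro a _ b _ hab
            simp only at hab
            have : (a : ℕ) = (b : ℕ) := by exact_mod_cast hab
            exact Fin.ext this
        have hc2 : (({v.2}ᶜ : Finset (Fin r))).card = r - 1 := by
          rw [Finset.card_compl]; simp
        calc _ ≤ 3 * (({v.2}ᶜ : Finset (Fin r))).card := Nat.mul_le_mul_right _ hc1
          _ = 3 * (r - 1) := by rw [hc2]


/-- trimming a dense reduced graph `R̃ ⊇ B_k^r` to a bounded-degree
subgraph `R` that still covers every column. -/
theorem reduced_graph_trim (r k : ℕ) (hr : 0 < r) (hk : 0 < k) (γ : ℝ) (hγ : 0 < γ)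
    (Rt : SimpleGraph (Fin k × Fin r)) (hB : graphB k r ≤ Rt)
    (hδ : MinDegreeGE Rt ((((r : ℝ) - 1) / (r : ℝ) + γ / 2) * ((k : ℝ) * r))) :
    -- (i) every column is covered by many vertices
    (∀ i : Fin k, γ / 2 * ((k : ℝ) * r) ≤
      (Set.ncard {v : Fin k × Fin r | v.1 ≠ i ∧ ∀ j : Fin r, Rt.Adj v (i, j)} : ℝ)) ∧
    -- (ii) the bounded-degree subgraph R
    (∃ R : SimpleGraph (Fin k × Fin r), R ≤ Rt ∧ graphB k r ≤ R ∧
      MaxDegreeLE R (3 * (r : ℝ) + 2 / γ) ∧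
      ∀ i : Fin k, ∃ s : Fin k × Fin r, s.1 ≠ i ∧ ∀ j : Fin r, R.Adj s (i, j)) := by
  classical
  have hrR : (1 : ℝ) ≤ (r : ℝ) := by exact_mod_cast hr
  have hkR : (1 : ℝ) ≤ (k : ℝ) := by exact_mod_cast hk
  have hrne : (r : ℝ) ≠ 0 := by positivity
  have hγne : γ ≠ 0 := ne_of_gt hγ
  have hgood := fun i => good_card r k hr hk γ hγ Rt hB hδ i
  -- part (i)
  have parti : ∀ i : Fin k, γ / 2 * ((k : ℝ) * r) ≤
      (Set.ncard {v : Fin k × Fin r | v.1 ≠ i ∧ ∀ j : Fin r, Rt.Adj v (i, j)} : ℝ) := by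
    intro i
    refine le_trans ?_ (hgood i)
    nlinarith [mul_nonneg (by positivity : (0:ℝ) ≤ γ / 2 * ((k : ℝ) * r)) (sub_nonneg.2 hrR)]
  refine ⟨parti, ?_⟩
  -- γ r ≤ 2
  have hγr : γ * r ≤ 2 := by
    set v0 : Fin k × Fin r := (⟨0, hk⟩, ⟨0, hr⟩) with hv0def
    have hv0 := hδ v0
    have hle : ((Rt.neighborSet v0).ncard : ℝ) ≤ (k : ℝ) * r - 1 := by
      rw [ncard_eq_degree]
      have hlt := SimpleGraph.degree_lt_card_verts (G := Rt) v0
      have hfc : Fintype.card (Fin k × Fin r) = k * r := by simp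
      rw [hfc] at hlt
      have h1 : Rt.degree v0 + 1 ≤ k * r := hlt
      have h2 : ((Rt.degree v0 : ℝ)) + 1 ≤ (k : ℝ) * r := by exact_mod_cast h1
      linarith
    have h4 : (((r : ℝ) - 1) / (r : ℝ)) * ((k : ℝ) * r) = ((r : ℝ) - 1) * k := by
      field_simp
    have h5 : γ / 2 * ((k : ℝ) * r) ≤ (k : ℝ) - 1 := by nlinarith [hv0, hle, h4]
    nlinarith [h5, hkR, hγ]
  -- the multiplicity bound t
  set x : ℝ := 2 / (γ * (r : ℝ) ^ 2) with hxdef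
  have hx0 : 0 ≤ x := by positivity
  set t : ℕ := ⌈x⌉₊ with htdef
  have htx : x ≤ (t : ℝ) := Nat.le_ceil x
  have htlt : (t : ℝ) < x + 1 := Nat.ceil_lt_add_one hx0
  -- the candidate sets
  set Gd : Fin k → Finset (Fin k × Fin r) :=
    fun i => univ.filter (fun v => v.1 ≠ i ∧ ∀ j : Fin r, Rt.Adj v (i, j)) with hGddef
  have hGdcard : ∀ i, γ / 2 * ((k : ℝ) * r) * r ≤ ((Gd i).card : ℝ) := by
    intro i
    have hset : {v : Fin k × Fin r | v.1 ≠ i ∧ ∀ j : Fin r, Rt.Adj v (i, j)} = ↑(Gd i) := by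
      ext v; simp [hGddef]
    have := hgood i
    rwa [hset, Set.ncard_coe_finset] at this
  have hGk : ∀ i, k ≤ t * (Gd i).card := by
    intro i
    have hxk : x * (γ / 2 * ((k : ℝ) * r) * r) = k := by
      rw [hxdef]; field_simp
    have h1 : (k : ℝ) ≤ (t : ℝ) * ((Gd i).card : ℝ) := by
      calc (k : ℝ) = x * (γ / 2 * ((k : ℝ) * r) * r) := hxk.symm
        _ ≤ (t : ℝ) * ((Gd i).card : ℝ) := by
            apply mul_le_mul htx (hGdcard i) (by positivity) (by positivity)
    exact_mod_cast h1
  obtain ⟨s, hsG, hcount⟩ := exists_greedy hk Gd hGk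
  have hs1 : ∀ i, (s i).1 ≠ i := fun i => ((Finset.mem_filter.1 (hsG i)).2).1
  have hs2 : ∀ i j, Rt.Adj (s i) (i, j) := fun i => ((Finset.mem_filter.1 (hsG i)).2).2
  -- the spike graph
  set spike : SimpleGraph (Fin k × Fin r) :=
    SimpleGraph.fromRel (fun p q => ∃ i : Fin k, p = s i ∧ q.1 = i) with hspdef
  set R : SimpleGraph (Fin k × Fin r) := graphB k r ⊔ spike with hRdef
  have hspike_le : spike ≤ Rt := by
    intro p q h
    obtain ⟨hne, hrel⟩ := h
    rcases hrel with ⟨i, hp, hq⟩ | ⟨i, hq, hp⟩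
    · subst hp
      have hqe : q = (i, q.2) := Prod.ext hq rfl
      rw [hqe]
      exact hs2 i q.2
    · subst hq
      have hpe : p = (i, p.2) := Prod.ext hp rfl
      rw [hpe]
      exact (hs2 i p.2).symm
  refine ⟨R, sup_le hB hspike_le, le_sup_left, ?_, ?_⟩
  · -- max degree
    intro v
    have hsplit : R.neighborSet v = (graphB k r).neighborSet v ∪ spike.neighborSet v := by
      ext u
      simp [hRdef, SimpleGraph.mem_neighborSet, SimpleGraph.sup_adj]
    have hBdeg := degB_le k r v
    have hSdeg : (spike.neighborSet v).ncard ≤ 1 + t * r := by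
      rw [Set.ncard_eq_toFinset_card', ← SimpleGraph.neighborFinset_def]
      have hsub : spike.neighborFinset v ⊆
          insert (s v.1) ((univ.filter fun i => s i = v).biUnion
            fun i => univ.filter fun u : Fin k × Fin r => u.1 = i) := by
        intro u hu
        rw [SimpleGraph.mem_neighborFinset] at hu
        obtain ⟨hne, hrel⟩ := hu
        rcases hrel with ⟨i, hv, hu1⟩ | ⟨i, hu1, hv⟩
        · refine Finset.mem_insert_of_mem (Finset.mem_biUnion.2 ⟨i, ?_, ?_⟩)
          · simp [hv.symm]
          · simp [hu1]
        · apply Finset.mem_insert.2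
          left
          rw [hu1, hv]
      calc (spike.neighborFinset v).card ≤ _ := Finset.card_le_card hsub
        _ ≤ 1 + ((univ.filter fun i => s i = v).biUnion
              fun i => univ.filter fun u : Fin k × Fin r => u.1 = i).card := by
            have := Finset.card_insert_le (s v.1) ((univ.filter fun i => s i = v).biUnion
              fun i => univ.filter fun u : Fin k × Fin r => u.1 = i)
            omega
        _ ≤ 1 + t * r := by
            have hcol : ∀ i : Fin k, (univ.filter fun u : Fin k × Fin r => u.1 = i).card = r := by
              intro i
              have : (univ.filter fun u : Fin k × Fin r => u.1 = i) =
                  {i} ×ˢ (univ : Finset (Fin r)) := by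
                ext ⟨a, b⟩; simp [eq_comm]
              rw [this, Finset.card_product]; simp
            have hb : ((univ.filter fun i => s i = v).biUnion
                fun i => univ.filter fun u : Fin k × Fin r => u.1 = i).card ≤
                ∑ i ∈ univ.filter fun i => s i = v,
                  (univ.filter fun u : Fin k × Fin r => u.1 = i).card :=
              Finset.card_biUnion_le
            have hsum : ∑ i ∈ univ.filter fun i => s i = v,
                (univ.filter fun u : Fin k × Fin r => u.1 = i).card =
                (univ.filter fun i => s i = v).card * r := by
              rw [Finset.sum_congr rfl fun i _ => hcol i, Finset.sum_const, smul_eq_mul]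
            have hcnt := hcount v
            have : (univ.filter fun i => s i = v).card * r ≤ t * r :=
              Nat.mul_le_mul_right _ hcnt
            omega
    have hRle : (R.neighborSet v).ncard ≤ 3 * (r - 1) + (1 + t * r) := by
      calc (R.neighborSet v).ncard
          ≤ ((graphB k r).neighborSet v).ncard + (spike.neighborSet v).ncard := by
            rw [hsplit]; exact Set.ncard_union_le _ _
        _ ≤ 3 * (r - 1) + (1 + t * r) := Nat.add_le_add hBdeg hSdeg
    have hRleR : ((R.neighborSet v).ncard : ℝ) ≤ 3 * ((r : ℝ) - 1) + (1 + (t : ℝ) * r) := by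
      have h1 : ((R.neighborSet v).ncard : ℝ) ≤ ((3 * (r - 1) + (1 + t * r) : ℕ) : ℝ) := by
        exact_mod_cast hRle
      refine le_trans h1 ?_
      push_cast [Nat.cast_sub hr]
      ring_nf
      linarith
    -- t * r ≤ 2/γ + 2
    have htr : (t : ℝ) * r ≤ 2 / γ + 2 := by
      have h1 : (t : ℝ) * r < x * r + r := by nlinarith [htlt, hrR]
      have h2 : x * r = 2 / (γ * r) := by rw [hxdef]; field_simp
      have h3 : 2 / (γ * r) + r ≤ 2 / γ + 2 := by
        rw [← sub_nonneg]
        have he : 2 / γ + 2 - (2 / (γ * r) + r) =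
            (2 * r + 2 * γ * r - 2 - γ * r ^ 2) / (γ * r) := by
          field_simp; ring
        rw [he]
        apply div_nonneg _ (by positivity)
        nlinarith [mul_nonneg (sub_nonneg.2 hrR) (sub_nonneg.2 hγr), mul_pos hγ (lt_of_lt_of_le one_pos hrR)]
      nlinarith [h1, h2.le, h2.ge, h3]
    calc ((R.neighborSet v).ncard : ℝ) ≤ 3 * ((r : ℝ) - 1) + (1 + (t : ℝ) * r) := hRleR
      _ ≤ 3 * (r : ℝ) + 2 / γ := by linarith
  · -- coverage
    intro i
    refine ⟨s i, hs1 i, fun j => ?_⟩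
    have hne : s i ≠ (i, j) := fun he => hs1 i (by rw [he])
    exact Or.inr ⟨hne, Or.inl ⟨i, rfl, rfl⟩⟩


end Paper
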